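/- Let X be a real Hilbert space and J : X → X* (the topological dual) a continuously Fréchet differentiable map with J(u) = 0 for some u ∈ X. Assume: (i) the bilinear form (v,w) ↦ ⟨J'(u)v, w⟩ on X × X is symmetric and there is α > 0 such that inf over v ∈ X \ {0} of sup over w ∈ X \ {0} of ⟨J'(u)v, w⟩ / (‖v‖‖w‖) ≥ α; (ii) (X_h) for h ∈ (0, h₀] is a family of finite-dimensional subspaces of X such that inf over v_h ∈ X_h of ‖u − v_h‖ tends to 0 as h → 0, and there is α̃ > 0 such that for every h, inf over v ∈ X_h \ {0} of sup over w ∈ X_h \ {0} of ⟨J'(u)v, w⟩ / (‖v‖‖w‖) ≥ α̃; (iii) there exist ε₀ > 0 and L ≥ 0 such that ‖J'(u) − J'(v)‖ ≤ L‖u − v‖ whenever ‖u − v‖ ≤ ε₀. Then for each sufficiently small δ > 0 there exists h_δ > 0 such that for all h ∈ (0, h_δ] there is a unique u_h ∈ X_h satisfying ⟨J(u_h), v_h⟩ = 0 for all v_h ∈ X_h together with ‖u − u_h‖ ≤ δ; moreover this u_h satisfies the quasi-optimal error estimate ‖u − u_h‖ ≤ (2‖J'(u)‖/α)(1 + ‖J'(u)‖/α̃)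 · inf over v_h ∈ X_h of ‖u − v_h‖. -/

import Mathlib

open Filter

set_option maxHeartbeats 2000000

open Filter Metric

section Helper

variable {X : Type*} [NormedAddCommGroup X] [InnerProductSpace ℝ X]

lemma CR_rem (J : X → (X →L[ℝ] ℝ)) (hJd : Differentiable ℝ J) (u : X)
    (ε₀ L : ℝ) (hL : 0 ≤ L)
    (hLip : ∀ v : X, ‖u - v‖ ≤ ε₀ → ‖fderiv ℝ J u - fderiv ℝ J v‖ ≤ L * ‖u - v‖)
    (y z : X) (hy : ‖u - y‖ ≤ ε₀) (hz : ‖u - z‖ ≤ ε₀) :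
    ‖J y - J z - fderiv ℝ J u (y - z)‖ ≤ L * max ‖u - y‖ ‖u - z‖ * ‖y - z‖ := by
  set A := fderiv ℝ J u with hA
  have hmax0 : 0 ≤ max ‖u - y‖ ‖u - z‖ := le_trans (norm_nonneg _) (le_max_left _ _)
  refine Convex.norm_image_sub_le_of_norm_fderiv_le' (fun x _ => hJd.differentiableAt)
    (fun x hx => ?_) (convex_segment z y) (left_mem_segment ℝ z y) (right_mem_segment ℝ z y)
  obtain ⟨a, b, ha, hb, hab, rfl⟩ := hx
  have hux : u - (a • z + b • y) = a • (u - z) + b • (u - y) := by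
    have : u = a • u + b • u := by rw [← add_smul, hab, one_smul]
    rw [smul_sub, smul_sub]; nth_rewrite 1 [this]; abel
  have hxn : ‖u - (a • z + b • y)‖ ≤ max ‖u - y‖ ‖u - z‖ := by
    rw [hux]
    calc ‖a • (u - z) + b • (u - y)‖ ≤ a * ‖u - z‖ + b * ‖u - y‖ := by
          refine (norm_add_le _ _).trans ?_
          rw [norm_smul, norm_smul, Real.norm_of_nonneg ha, Real.norm_of_nonneg hb]
      _ ≤ a * max ‖u - y‖ ‖u - z‖ + b * max ‖u - y‖ ‖u - z‖ := by
          gcongr; exact le_max_right _ _; exact le_max_left _ _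
      _ = max ‖u - y‖ ‖u - z‖ := by rw [← add_mul, hab, one_mul]
  rw [norm_sub_rev]
  exact le_trans (hLip _ (hxn.trans (max_le hy hz))) (by gcongr)

lemma CR_discrete (J : X → (X →L[ℝ] ℝ)) (hJd : Differentiable ℝ J) (u : X) (hJu : J u = 0)
    (Y : Submodule ℝ X) (hfinY : FiniteDimensional ℝ Y)
    (αt : ℝ) (hαt : 0 < αt)
    (hd : ∀ v ∈ Y, v ≠ 0 →
      αt ≤ ⨆ w : {w : X // w ∈ Y ∧ w ≠ 0}, fderiv ℝ J u v w.1 / (‖v‖ * ‖w.1‖))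
    (ε₀ L : ℝ) (hε₀ : 0 < ε₀) (hL : 0 ≤ L)
    (hLip : ∀ v : X, ‖u - v‖ ≤ ε₀ → ‖fderiv ℝ J u - fderiv ℝ J v‖ ≤ L * ‖u - v‖)
    (δ : ℝ) (hδpos : 0 < δ) (hδε : δ ≤ ε₀) (hδcontr : L * δ ≤ αt / 2)
    (hd1 : Metric.infDist u (Y : Set X) ≤ δ / 2)
    (hd2 : (L * ε₀ + ‖fderiv ℝ J u‖ + 1) * Metric.infDist u (Y : Set X) ≤ αt * δ / 4) :
    ∃ uh : X, uh ∈ Y ∧ (∀ vh ∈ Y, J uh vh = 0) ∧ ‖u - uh‖ ≤ δ ∧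
      (∀ uh' : X, uh' ∈ Y → (∀ vh ∈ Y, J uh' vh = 0) → ‖u - uh'‖ ≤ δ → uh' = uh) ∧
      ‖u - uh‖ ≤ 2 * (1 + ‖fderiv ℝ J u‖ / αt) * Metric.infDist u (Y : Set X) := by
  classical
  haveI := hfinY
  haveI : CompleteSpace Y := FiniteDimensional.complete ℝ Y
  set A := fderiv ℝ J u with hA
  set M := ‖A‖ with hM
  have hM0 : 0 ≤ M := norm_nonneg A
  set d := Metric.infDist u (Y : Set X) with hdd
  have hd0 : 0 ≤ d := Metric.infDist_nonneg
  -- the nearest point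
  set c : Y := Y.orthogonalProjection u with hc
  have hcmin : ∀ v ∈ Y, ‖u - (c : X)‖ ≤ ‖u - v‖ := by
    intro v hv
    rw [hc, show ((Y.orthogonalProjection u : Y) : X) = Y.starProjection u from rfl,
      Submodule.starProjection_minimal]
    exact ciInf_le_of_le ⟨0, by rintro x ⟨w, rfl⟩; exact norm_nonneg _⟩ ⟨v, hv⟩ le_rfl
  have hcd : ‖u - (c : X)‖ = d := by
    refine le_antisymm ?_ ?_
    · rw [hdd, Metric.infDist_eq_iInf]
      refine le_ciInf fun v => ?_
      rw [dist_eq_norm]; exact hcmin v.1 v.2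
    · rw [← dist_eq_norm]; exact Metric.infDist_le_dist_of_mem c.2
  -- the discrete operator
  set D := (InnerProductSpace.toDual ℝ Y).symm with hD
  have hDnorm : ∀ f : Y →L[ℝ] ℝ, ‖D f‖ = ‖f‖ := fun f =>
    LinearIsometryEquiv.norm_map _ f
  have hcomp_norm : ∀ f : X →L[ℝ] ℝ, ‖f.comp Y.subtypeL‖ ≤ ‖f‖ := by
    intro f
    refine ContinuousLinearMap.opNorm_le_bound _ (norm_nonneg f) fun w => ?_
    exact f.le_opNorm w.1
  set BL : Y →ₗ[ℝ] Y :=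
    { toFun := fun y => D ((A y.1).comp Y.subtypeL)
      map_add' := by
        intro y z
        simp [Submodule.coe_add, map_add, ContinuousLinearMap.add_comp]
      map_smul' := by
        intro m y
        simp [Submodule.coe_smul, map_smul, ContinuousLinearMap.smul_comp] } with hBL
  have hBLapp : ∀ y : Y, BL y = D ((A y.1).comp Y.subtypeL) := fun y => rfl
  have hBlow : ∀ y : Y, αt * ‖y‖ ≤ ‖BL y‖ := by
    intro y
    rcases eq_or_ne y 0 with rfl | hy0
    · simp
    have hyv : (y : X) ≠ 0 := fun h => hy0 (by exact_mod_cast Subtype.ext h)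
    have hyn : (0 : ℝ) < ‖y‖ := norm_pos_iff.2 hy0
    have h1 := hd y.1 y.2 hyv
    have h2 : ∀ w : {w : X // w ∈ Y ∧ w ≠ 0},
        A y.1 w.1 / (‖y.1‖ * ‖w.1‖) ≤ ‖BL y‖ / ‖y‖ := by
      intro w
      have hw0 : (0 : ℝ) < ‖w.1‖ := norm_pos_iff.2 w.2.2
      have hkey : A y.1 w.1 ≤ ‖BL y‖ * ‖w.1‖ := by
        have heq : A y.1 w.1 = inner ℝ (BL y) (⟨w.1, w.2.1⟩ : Y) := by
          rw [hBLapp, hD, ← InnerProductSpace.toDual_apply_apply,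
            LinearIsometryEquiv.apply_symm_apply]
          rfl
        have hwn : ‖(⟨w.1, w.2.1⟩ : Y)‖ = ‖w.1‖ := rfl
        rw [heq]
        exact (real_inner_le_norm _ _).trans (by rw [hwn])
      have hyn' : (0 : ℝ) < ‖y.1‖ := hyn
      have hyy : ‖y.1‖ = ‖y‖ := (Submodule.norm_coe y)
      rw [div_le_div_iff₀ (mul_pos hyn' hw0) hyn, hyy]
      nlinarith [norm_nonneg (BL y), hkey, hyn.le, hw0.le]
    have := h1.trans (Real.iSup_le h2 (div_nonneg (norm_nonneg _) (norm_nonneg _)))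
    rwa [le_div_iff₀ hyn] at this
  have hBinj : Function.Injective BL := by
    intro y z hyz
    have h := hBlow (y - z)
    rw [map_sub, hyz, sub_self, norm_zero] at h
    have h2 : ‖y - z‖ ≤ 0 := by nlinarith [norm_nonneg (y - z)]
    have : y - z = 0 := norm_le_zero_iff.1 h2
    exact sub_eq_zero.1 this
  have hBsurj : Function.Surjective BL := LinearMap.injective_iff_surjective.1 hBinj
  set E := LinearEquiv.ofBijective BL ⟨hBinj, hBsurj⟩ with hE
  have hEinv : ∀ z : Y, αt * ‖E.symm z‖ ≤ ‖z‖ := by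
    intro z
    have h := hBlow (E.symm z)
    have h2 : BL (E.symm z) = z := E.apply_symm_apply z
    rwa [h2] at h
  set Φ : X → Y := fun x => D ((J x).comp Y.subtypeL) with hΦ
  have hΦapp : ∀ x : X, Φ x = D ((J x).comp Y.subtypeL) := fun _ => rfl
  have hΦnorm : ∀ x : X, ‖Φ x‖ ≤ ‖J x‖ := by
    intro x
    rw [hΦapp, hDnorm]
    exact hcomp_norm _
  set F : Y → Y := fun y => y - E.symm (Φ y.1) with hF
  have hfix : ∀ y : Y, F y = y ↔ ∀ w ∈ Y, J y.1 w = 0 := by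
    intro y
    constructor
    · intro h w hw
      have h1 : E.symm (Φ y.1) = 0 := by
        have h' : y - E.symm (Φ y.1) = y := h
        have := sub_eq_self.1 h'
        exact this
      have h2 : Φ y.1 = 0 := by
        have := congrArg E h1
        rwa [E.apply_symm_apply, map_zero] at this
      have h3 : (J y.1).comp Y.subtypeL = 0 := by
        rw [hΦ] at h2
        exact (LinearIsometryEquiv.map_eq_zero_iff _).1 h2
      have := DFunLike.congr_fun h3 (⟨w, hw⟩ : Y)
      simpa using this
    · intro h
      have h3 : (J y.1).comp Y.subtypeL = 0 := by
        ext w; exact h w.1 w.2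
      show y - E.symm (Φ y.1) = y
      rw [hΦapp, h3]
      simp
  have hFdiff : ∀ y z : Y, F y - F z
      = E.symm (D ((A (y.1 - z.1) - (J y.1 - J z.1)).comp Y.subtypeL)) := by
    intro y z
    have h1 : y - z = E.symm (BL (y - z)) := (E.symm_apply_apply (y - z)).symm
    have h2 : F y - F z = (y - z) - E.symm (Φ y.1 - Φ z.1) := by
      rw [hF]
      simp only [map_sub]
      abel
    rw [h2, h1, ← map_sub E.symm]
    congr 1
    rw [hBLapp, hΦapp, hΦapp, ← map_sub D, ← map_sub D]
    congr 1
  have hFnorm : ∀ y z : Y, αt * ‖F y - F z‖ ≤ ‖A (y.1 - z.1) - (J y.1 - J z.1)‖ := by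
    intro y z
    rw [hFdiff]
    refine (hEinv _).trans ?_
    rw [hDnorm]
    exact hcomp_norm _
  have hcontr : ∀ y z : Y, ‖u - y.1‖ ≤ δ → ‖u - z.1‖ ≤ δ →
      ‖F y - F z‖ ≤ (1/2) * ‖y - z‖ := by
    intro y z hy hz
    have h1 := CR_rem J hJd u ε₀ L hL hLip y.1 z.1 (hy.trans hδε) (hz.trans hδε)
    have hnn : ‖y.1 - z.1‖ = ‖y - z‖ := by
      rw [show y.1 - z.1 = ((y - z : Y) : X) from rfl, Submodule.norm_coe]
    have h2 : ‖A (y.1 - z.1) - (J y.1 - J z.1)‖ ≤ (αt/2) * ‖y - z‖ := by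
      rw [norm_sub_rev]
      refine h1.trans ?_
      rw [hnn]
      have hmax : max ‖u - y.1‖ ‖u - z.1‖ ≤ δ := max_le hy hz
      have hLm : L * max ‖u - y.1‖ ‖u - z.1‖ ≤ αt / 2 :=
        le_trans (mul_le_mul_of_nonneg_left hmax hL) hδcontr
      exact mul_le_mul_of_nonneg_right hLm (norm_nonneg _)
    have h3 := (hFnorm y z).trans h2
    nlinarith [norm_nonneg (F y - F z)]
  have hdε : d ≤ ε₀ := hd1.trans (by linarith)
  have hucd : ‖u - (c : X)‖ ≤ ε₀ := by rw [hcd]; exact hdε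
  have hJc : ‖J (c : X)‖ ≤ (L * d + M) * d := by
    have h1 := CR_rem J hJd u ε₀ L hL hLip c.1 u hucd (by simp [hε₀.le])
    rw [hJu, sub_zero] at h1
    have hmax : max ‖u - c.1‖ ‖u - u‖ = d := by
      rw [sub_self, norm_zero, hcd]; exact max_eq_left hd0
    rw [hmax] at h1
    have hcu : ‖c.1 - u‖ = d := by rw [norm_sub_rev, hcd]
    rw [hcu] at h1
    have hAn : ‖A (c.1 - u)‖ ≤ M * d :=
      (A.le_opNorm _).trans (le_of_eq (by rw [hcu]))
    have hN : ‖J c.1‖ ≤ ‖J c.1 - A (c.1 - u)‖ + ‖A (c.1 - u)‖ := by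
      simpa using norm_add_le (J c.1 - A (c.1 - u)) (A (c.1 - u))
    have hfin : ‖J c.1‖ ≤ L * d * d + M * d := hN.trans (add_le_add h1 hAn)
    have hring : (L * d + M) * d = L * d * d + M * d := by ring
    rw [hring]
    exact hfin
  have hFc : ‖F c - c‖ ≤ δ / 4 := by
    have h1 : F c - c = -(E.symm (Φ c.1)) := by rw [hF]; exact sub_sub_cancel_left _ _
    rw [h1, norm_neg]
    have h2 : αt * ‖E.symm (Φ c.1)‖ ≤ (L * d + M) * d :=
      (hEinv _).trans ((hΦnorm _).trans hJc)
    have h3 : (L * d + M) * d ≤ αt * δ / 4 := by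
      have hlM : L * d ≤ L * ε₀ := mul_le_mul_of_nonneg_left hdε hL
      exact le_trans (mul_le_mul_of_nonneg_right (by linarith) hd0) hd2
    have h4 : αt * ‖E.symm (Φ c.1)‖ ≤ αt * (δ / 4) := by linarith [h2.trans h3]
    exact le_of_mul_le_mul_left h4 hαt
  set r := δ - d with hr
  have hrpos : 0 < r := by rw [hr]; linarith
  have hr2 : δ / 2 ≤ r := by rw [hr]; linarith
  set s : Set Y := Metric.closedBall c r with hs
  have hsmem : ∀ y : Y, y ∈ s → ‖y - c‖ ≤ r := by
    intro y hy
    rw [← dist_eq_norm]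
    exact Metric.mem_closedBall.1 hy
  have huy : ∀ y : Y, y ∈ s → ‖u - y.1‖ ≤ δ := by
    intro y hy
    have h1 : ‖y.1 - c.1‖ ≤ r := by
      rw [show y.1 - c.1 = ((y - c : Y) : X) from rfl, Submodule.norm_coe]
      exact hsmem y hy
    have h2 : u - y.1 = (u - c.1) + (c.1 - y.1) := by abel
    calc ‖u - y.1‖ ≤ ‖u - c.1‖ + ‖c.1 - y.1‖ := by rw [h2]; exact norm_add_le _ _
      _ ≤ d + r := by
          gcongr
          · exact hcd.le
          · rw [norm_sub_rev]; exact h1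
      _ = δ := by rw [hr]; ring
  have hucδ : ‖u - c.1‖ ≤ δ := by rw [hcd]; linarith
  have hmaps : Set.MapsTo F s s := by
    intro y hy
    have h1 := hcontr y c (huy y hy) hucδ
    have h2 : ‖F y - c‖ ≤ r := by
      have h3 : F y - c = (F y - F c) + (F c - c) := by abel
      calc ‖F y - c‖ ≤ ‖F y - F c‖ + ‖F c - c‖ := by rw [h3]; exact norm_add_le _ _
        _ ≤ (1/2) * ‖y - c‖ + δ/4 := add_le_add h1 hFc
        _ ≤ (1/2) * r + δ/4 := by gcongr; exact hsmem y hy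
        _ ≤ r := by linarith
    rw [hs, Metric.mem_closedBall, dist_eq_norm]
    exact h2
  have hsc : IsComplete s := Metric.isClosed_closedBall.isComplete
  have hcs : c ∈ s := Metric.mem_closedBall_self hrpos.le
  have hcontra : ContractingWith (1/2 : NNReal) (hmaps.restrict F s s) := by
    constructor
    · have h12 : ((1/2 : NNReal) : ℝ) < 1 := by norm_num
      exact_mod_cast h12
    · refine LipschitzWith.of_dist_le_mul fun a b => ?_
      have h1 := hcontr a.1 b.1 (huy a.1 a.2) (huy b.1 b.2)
      have h2 : dist (hmaps.restrict F s s a) (hmaps.restrict F s s b)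
          = dist (F a.1) (F b.1) := rfl
      rw [h2, dist_eq_norm, Subtype.dist_eq, dist_eq_norm]
      calc ‖F a.1 - F b.1‖ ≤ (1/2) * ‖a.1 - b.1‖ := h1
        _ = ((1/2 : NNReal) : ℝ) * ‖a.1 - b.1‖ := by norm_num
  obtain ⟨uh, hus, hufix, -, -⟩ :=
    hcontra.exists_fixedPoint' hsc hmaps hcs (edist_ne_top _ _)
  have hsol : ∀ w ∈ Y, J uh.1 w = 0 := (hfix uh).1 hufix
  refine ⟨uh.1, uh.2, hsol, huy uh hus, ?_, ?_⟩
  · intro uh' hmem hsol' hclose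
    have hfy' : F ⟨uh', hmem⟩ = ⟨uh', hmem⟩ := (hfix ⟨uh', hmem⟩).2 hsol'
    have h1 := hcontr ⟨uh', hmem⟩ uh hclose (huy uh hus)
    rw [hfy', show F uh = uh from hufix] at h1
    have h2 : ‖(⟨uh', hmem⟩ : Y) - uh‖ ≤ 0 := by linarith
    have h3 : (⟨uh', hmem⟩ : Y) = uh := by rwa [norm_le_zero_iff, sub_eq_zero] at h2
    exact congrArg Subtype.val h3
  · set t := ‖u - uh.1‖ with htdef
    have ht : t ≤ δ := huy uh hus
    have ht0 : 0 ≤ t := norm_nonneg _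
    have hrem := CR_rem J hJd u ε₀ L hL hLip uh.1 u ((huy uh hus).trans hδε) (by simp [hε₀.le])
    rw [hJu, sub_zero] at hrem
    have hmax : max ‖u - uh.1‖ ‖u - u‖ = t := by
      rw [sub_self, norm_zero]; exact max_eq_left ht0
    rw [hmax] at hrem
    have huu : ‖uh.1 - u‖ = t := by rw [norm_sub_rev]
    rw [huu] at hrem
    -- bound on ‖BL (uh - c)‖
    have hzero : (J uh.1).comp Y.subtypeL = 0 := by ext w; exact hsol w.1 w.2
    have hBe2 : ‖BL (uh - c)‖ ≤ L * t * t + M * d := by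
      rw [hBLapp, hDnorm]
      have hco : ((uh - c : Y) : X) = uh.1 - c.1 := rfl
      rw [hco]
      have hsplit : (A (uh.1 - c.1)).comp Y.subtypeL
          = ((A (uh.1 - u) - J uh.1) + A (u - c.1)).comp Y.subtypeL
            + (J uh.1).comp Y.subtypeL := by
        rw [← ContinuousLinearMap.add_comp]
        congr 1
        have h5 : A (uh.1 - c.1) = A (uh.1 - u) + A (u - c.1) := by
          rw [← map_add]; congr 1; abel
        rw [h5]; abel
      rw [hsplit, hzero, add_zero]
      refine (hcomp_norm _).trans ?_
      calc ‖(A (uh.1 - u) - J uh.1) + A (u - c.1)‖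
          ≤ ‖A (uh.1 - u) - J uh.1‖ + ‖A (u - c.1)‖ := norm_add_le _ _
        _ ≤ L * t * t + M * d := by
            gcongr
            · rw [norm_sub_rev]
              have : J uh.1 - A (uh.1 - u) = -(A (uh.1 - u) - J uh.1) := by abel
              exact hrem
            · exact (A.le_opNorm _).trans (by rw [hcd])
    have hec : αt * ‖uh - c‖ ≤ L * t * t + M * d := (hBlow _).trans hBe2
    have htd : t ≤ d + ‖uh - c‖ := by
      have h2 : u - uh.1 = (u - c.1) + (c.1 - uh.1) := by abel
      calc t = ‖u - uh.1‖ := rfl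
        _ ≤ ‖u - c.1‖ + ‖c.1 - uh.1‖ := by rw [h2]; exact norm_add_le _ _
        _ = d + ‖uh - c‖ := by
            rw [hcd, norm_sub_rev, show uh.1 - c.1 = ((uh - c : Y) : X) from rfl]
            norm_cast
    have hLt : L * t ≤ αt / 2 := le_trans (mul_le_mul_of_nonneg_left ht hL) hδcontr
    have hgoal : 2 * (1 + M / αt) * d = (2 * (αt + M) * d) / αt := by
      field_simp
    rw [hgoal, le_div_iff₀ hαt]
    nlinarith [norm_nonneg (uh - c), hd0, mul_le_mul_of_nonneg_left htd hαt.le,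
      mul_le_mul_of_nonneg_right hLt ht0]


end Helper
/-- **abstract Caloz–Rappaz theorem.** Let `X` be a real Hilbert space and
`J : X → X*` a `C¹` map with `J(u) = 0`. Assume symmetry and an inf-sup condition for
`J'(u)` on `X`, a family `(X_h)` of finite-dimensional subspaces approximating `u` on which
`J'(u)` satisfies a discrete inf-sup condition, and local Lipschitz continuity of `J'` at `u`.
Then for each sufficiently small `δ > 0` there is `h_δ > 0` such that for all `h ∈ (0, h_δ]`
there is a unique `u_h ∈ X_h` with `⟨J(u_h), v_h⟩ = 0` for all `v_h ∈ X_h` and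
`‖u − u_h‖ ≤ δ`, and this `u_h` is a quasi-best approximation of `u`. -/
theorem stmt1 {X : Type*} [NormedAddCommGroup X] [InnerProductSpace ℝ X] [CompleteSpace X]
    (J : X → (X →L[ℝ] ℝ)) (hJC1 : ContDiff ℝ 1 J)
    (u : X) (hJu : J u = 0)
    (hsymm : ∀ v w : X, fderiv ℝ J u v w = fderiv ℝ J u w v)
    (α : ℝ) (hα : 0 < α)
    (hinfsup : ∀ v : X, v ≠ 0 →
      α ≤ ⨆ w : {w : X // w ≠ 0}, fderiv ℝ J u v w.1 / (‖v‖ * ‖w.1‖))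
    (h₀ : ℝ) (hh₀ : 0 < h₀)
    (Xh : ℝ → Submodule ℝ X)
    (hfin : ∀ h ∈ Set.Ioc (0 : ℝ) h₀, FiniteDimensional ℝ (Xh h))
    (happrox : Tendsto (fun h => Metric.infDist u ((Xh h : Set X)))
      (nhdsWithin 0 (Set.Ioc 0 h₀)) (nhds 0))
    (αt : ℝ) (hαt : 0 < αt)
    (hdinfsup : ∀ h ∈ Set.Ioc (0 : ℝ) h₀, ∀ v ∈ Xh h, v ≠ 0 →
      αt ≤ ⨆ w : {w : X // w ∈ Xh h ∧ w ≠ 0}, fderiv ℝ J u v w.1 / (‖v‖ * ‖w.1‖))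
    (ε₀ L : ℝ) (hε₀ : 0 < ε₀) (hL : 0 ≤ L)
    (hLip : ∀ v : X, ‖u - v‖ ≤ ε₀ → ‖fderiv ℝ J u - fderiv ℝ J v‖ ≤ L * ‖u - v‖) :
    ∃ δ₀ > 0, ∀ δ : ℝ, 0 < δ → δ ≤ δ₀ →
      ∃ hδ : ℝ, 0 < hδ ∧ hδ ≤ h₀ ∧ ∀ h : ℝ, 0 < h → h ≤ hδ →
        ∃ uh : X, uh ∈ Xh h ∧ (∀ vh ∈ Xh h, J uh vh = 0) ∧ ‖u - uh‖ ≤ δ ∧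
          (∀ uh' : X, uh' ∈ Xh h → (∀ vh ∈ Xh h, J uh' vh = 0) → ‖u - uh'‖ ≤ δ → uh' = uh) ∧
          ‖u - uh‖ ≤ (2 * ‖fderiv ℝ J u‖ / α) * (1 + ‖fderiv ℝ J u‖ / αt) *
            Metric.infDist u ((Xh h : Set X)) := by
  classical
  set A := fderiv ℝ J u with hA
  set M := ‖A‖ with hM
  by_cases hsub : Subsingleton X
  · refine ⟨1, one_pos, fun δ hδpos _ => ⟨h₀, hh₀, le_rfl, fun h hh1 hh2 => ?_⟩⟩
    refine ⟨0, (Xh h).zero_mem, fun vh _ => ?_, ?_,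
      fun uh' _ _ _ => Subsingleton.elim _ _, ?_⟩
    · rw [Subsingleton.elim vh 0, map_zero]
    · rw [show ‖u - 0‖ = 0 from by rw [Subsingleton.elim u 0, sub_zero, norm_zero]]
      exact hδpos.le
    · rw [show ‖u - 0‖ = 0 from by rw [Subsingleton.elim u 0, sub_zero, norm_zero]]
      have h1 : 0 ≤ Metric.infDist u ((Xh h : Set X)) := Metric.infDist_nonneg
      have h2 : (0:ℝ) ≤ 2 * M / α := by positivity
      have h3 : (0:ℝ) ≤ 1 + M / αt := by positivity
      exact mul_nonneg (mul_nonneg h2 h3) h1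
  · haveI : Nontrivial X := not_subsingleton_iff_nontrivial.1 hsub
    obtain ⟨v, hv⟩ := exists_ne (0 : X)
    have hαM : α ≤ M := by
      refine le_trans (hinfsup v hv) (Real.iSup_le (fun w => ?_) (norm_nonneg A))
      have hv0 : (0:ℝ) < ‖v‖ := norm_pos_iff.2 hv
      have hw0 : (0:ℝ) < ‖w.1‖ := norm_pos_iff.2 w.2
      rw [div_le_iff₀ (mul_pos hv0 hw0)]
      have h1 : A v w.1 ≤ ‖A v‖ * ‖w.1‖ :=
        (le_abs_self _).trans ((A v).le_opNorm w.1)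
      have h2 : ‖A v‖ * ‖w.1‖ ≤ (M * ‖v‖) * ‖w.1‖ :=
        mul_le_mul_of_nonneg_right (A.le_opNorm v) (norm_nonneg _)
      calc A v w.1 ≤ (M * ‖v‖) * ‖w.1‖ := h1.trans h2
        _ = M * (‖v‖ * ‖w.1‖) := by ring
    have hM0 : (0:ℝ) < M := lt_of_lt_of_le hα hαM
    have hJd : Differentiable ℝ J := hJC1.differentiable one_ne_zero
    set δ₀ := min ε₀ (αt / (2 * (L + 1))) with hδ₀
    have hδ₀pos : 0 < δ₀ := lt_min hε₀ (div_pos hαt (by linarith))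
    refine ⟨δ₀, hδ₀pos, fun δ hδpos hδle => ?_⟩
    have hδε : δ ≤ ε₀ := hδle.trans (min_le_left _ _)
    have hδcontr : L * δ ≤ αt / 2 := by
      have h1 : δ ≤ αt / (2 * (L + 1)) := hδle.trans (min_le_right _ _)
      have h2 : L * δ ≤ L * (αt / (2 * (L + 1))) := mul_le_mul_of_nonneg_left h1 hL
      have hpos : (0:ℝ) < 2 * (L + 1) := by linarith
      have h3 : L * (αt / (2 * (L + 1))) ≤ αt / 2 := by
        rw [show L * (αt / (2 * (L + 1))) = (L * αt) / (2 * (L + 1)) from by ring,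
          div_le_div_iff₀ hpos two_pos]
        nlinarith [hαt.le, hL]
      linarith
    set K := L * ε₀ + M + 1 with hK
    have hKpos : (0:ℝ) < K := by
      have := mul_nonneg hL hε₀.le
      rw [hK]; linarith
    set εd := min (δ / 2) (αt * δ / (4 * K)) with hεd
    have hεdpos : 0 < εd :=
      lt_min (by linarith) (div_pos (mul_pos hαt hδpos) (by linarith))
    have hev : ∀ᶠ h in nhdsWithin 0 (Set.Ioc 0 h₀),
        Metric.infDist u ((Xh h : Set X)) < εd :=
      happrox.eventually (eventually_lt_nhds hεdpos)
    obtain ⟨ρ, hρpos, hρ⟩ := Metric.mem_nhdsWithin_iff.1 hev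
    refine ⟨min (ρ / 2) h₀, lt_min (by linarith) hh₀, min_le_right _ _,
      fun h hh1 hh2 => ?_⟩
    have hIoc : h ∈ Set.Ioc (0:ℝ) h₀ := ⟨hh1, hh2.trans (min_le_right _ _)⟩
    have hball : h ∈ Metric.ball (0:ℝ) ρ := by
      rw [Metric.mem_ball, Real.dist_eq, sub_zero, abs_of_pos hh1]
      have := hh2.trans (min_le_left _ _)
      linarith
    have hdist := hρ ⟨hball, hIoc⟩
    haveI hfinh : FiniteDimensional ℝ (Xh h) := hfin h hIoc
    set d := Metric.infDist u ((Xh h : Set X)) with hd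
    have hd0 : 0 ≤ d := Metric.infDist_nonneg
    have hd1 : d ≤ δ / 2 := le_of_lt (hdist.trans_le (min_le_left _ _))
    have hd2 : K * d ≤ αt * δ / 4 := by
      have h1 : d ≤ αt * δ / (4 * K) := le_of_lt (hdist.trans_le (min_le_right _ _))
      have h2 : K * d ≤ K * (αt * δ / (4 * K)) := mul_le_mul_of_nonneg_left h1 hKpos.le
      have h3 : K * (αt * δ / (4 * K)) = αt * δ / 4 := by
        rw [eq_div_iff (by norm_num : (4:ℝ) ≠ 0)]
        field_simp
      linarith
    obtain ⟨uh, hu1, hu2, hu3, hu4, hu5⟩ :=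
      CR_discrete J hJd u hJu (Xh h) hfinh αt hαt (hdinfsup h hIoc) ε₀ L hε₀ hL hLip
        δ hδpos hδε hδcontr hd1 hd2
    refine ⟨uh, hu1, hu2, hu3, hu4, hu5.trans ?_⟩
    have hfac : 2 * (1 + M / αt) ≤ 2 * M / α * (1 + M / αt) := by
      have h1 : (1:ℝ) ≤ M / α := (one_le_div hα).2 hαM
      have h2 : (0:ℝ) ≤ 1 + M / αt := by positivity
      have h4 : (1:ℝ) * (1 + M / αt) ≤ (M / α) * (1 + M / αt) :=
        mul_le_mul_of_nonneg_right h1 h2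
      calc 2 * (1 + M / αt) = 2 * ((1:ℝ) * (1 + M / αt)) := by ring
        _ ≤ 2 * ((M / α) * (1 + M / αt)) := by linarith
        _ = 2 * M / α * (1 + M / αt) := by ring
    exact mul_le_mul_of_nonneg_right hfac hd0
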